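/- Let f : Δ → Δ be a holomorphic self-map of the open unit disc, and let (z_k) be a sequence in Δ converging to 1 nontangentially such that f(z_k) = z_k + o(|z_k - 1|) as k → ∞ (i.e. (f(z_k) - z_k)/|z_k - 1| → 0). Then for every z ∈ Δ the Julia-type inequality |1 - f(z)|² / (1 - |f(z)|²) ≤ |1 - z|² / (1 - |z|²) holds. -/

import Mathlib

open Metric Filter Complex

private noncomputable def moeb (a ζ : ℂ) : ℂ := (a - ζ) / (1 - (starRingEnd ℂ) a * ζ)

private lemma den_ne (a ζ : ℂ) (ha : ‖a‖ < 1) (hζ : ‖ζ‖ < 1) :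
    1 - (starRingEnd ℂ) a * ζ ≠ 0 := by
  intro h
  have h1 : (starRingEnd ℂ) a * ζ = 1 := by linear_combination -h
  have := congrArg (‖·‖) h1
  rw [norm_mul, norm_one, Complex.norm_conj] at this
  nlinarith [norm_nonneg a, norm_nonneg ζ]

private lemma normSq_identity (a b : ℂ) :
    Complex.normSq (1 - (starRingEnd ℂ) a * b) - Complex.normSq (a - b)
      = (1 - Complex.normSq a) * (1 - Complex.normSq b) := by
  simp only [Complex.normSq_apply, Complex.sub_re, Complex.sub_im, Complex.mul_re,
    Complex.mul_im, Complex.conj_re, Complex.conj_im, Complex.one_re, Complex.one_im]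
  ring

private lemma moeb_mem (a ζ : ℂ) (ha : ‖a‖ < 1) (hζ : ‖ζ‖ < 1) :
    ‖moeb a ζ‖ < 1 := by
  have hd := den_ne a ζ ha hζ
  have hD : 0 < Complex.normSq (1 - (starRingEnd ℂ) a * ζ) := Complex.normSq_pos.2 hd
  have hid := normSq_identity a ζ
  have hP : 0 < (1 - Complex.normSq a) * (1 - Complex.normSq ζ) := by
    have h1 : 0 < 1 - Complex.normSq a := by
      nlinarith [norm_nonneg a, Complex.sq_norm a]
    have h2 : 0 < 1 - Complex.normSq ζ := by
      nlinarith [norm_nonneg ζ, Complex.sq_norm ζ]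
    exact mul_pos h1 h2
  have hlt : Complex.normSq (a - ζ) < Complex.normSq (1 - (starRingEnd ℂ) a * ζ) := by linarith
  have hns : Complex.normSq (moeb a ζ)
      = Complex.normSq (a - ζ) / Complex.normSq (1 - (starRingEnd ℂ) a * ζ) := by
    simp [moeb, map_div₀]
  have h1 : Complex.normSq (moeb a ζ) < 1 := by
    rw [hns, div_lt_one hD]; exact hlt
  nlinarith [norm_nonneg (moeb a ζ), Complex.sq_norm (moeb a ζ)]

private lemma moeb_invol (a ζ : ℂ) (ha : ‖a‖ < 1) (hζ : ‖ζ‖ < 1) :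
    moeb a (moeb a ζ) = ζ := by
  have hd := den_ne a ζ ha hζ
  have hd2 := den_ne a (moeb a ζ) ha (moeb_mem a ζ ha hζ)
  simp only [moeb] at hd2 ⊢
  field_simp at hd2 ⊢
  ring_nf
  ring_nf at hd2
  have hne : (1 : ℂ) - a * (starRingEnd ℂ) a ≠ 0 := by
    intro h; apply hd2
    have h' : (starRingEnd ℂ) a * a = 1 := by linear_combination -h
    rw [h']; ring
  field_simp [hne]
  ring

private lemma moeb_diff (a : ℂ) (ha : ‖a‖ < 1) :
    DifferentiableOn ℂ (moeb a) (ball (0 : ℂ) 1) := by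
  apply DifferentiableOn.div
  · exact (differentiable_const a).differentiableOn.sub differentiable_id.differentiableOn
  · exact (differentiable_const (1:ℂ)).differentiableOn.sub
      ((differentiable_const _).mul differentiable_id).differentiableOn
  · intro ζ hζ
    exact den_ne a ζ ha (by simpa using mem_ball_zero_iff.1 hζ)

private lemma moeb_zero (a : ℂ) : moeb a 0 = a := by simp [moeb]

private lemma abs_lt_one_iff_mem {ζ : ℂ} : ζ ∈ ball (0 : ℂ) 1 ↔ ‖ζ‖ < 1 := by
  simp [mem_ball_zero_iff]

private lemma schwarz_pick (f : ℂ → ℂ) (hf : DifferentiableOn ℂ f (ball (0 : ℂ) 1))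
    (hmap : Set.MapsTo f (ball (0 : ℂ) 1) (ball (0 : ℂ) 1)) {u v : ℂ}
    (hu : u ∈ ball (0 : ℂ) 1) (hv : v ∈ ball (0 : ℂ) 1) :
    ‖moeb (f u) (f v)‖ ≤ ‖moeb u v‖ := by
  have hau : ‖u‖ < 1 := abs_lt_one_iff_mem.1 hu
  have hav : ‖v‖ < 1 := abs_lt_one_iff_mem.1 hv
  have hafu : ‖f u‖ < 1 := abs_lt_one_iff_mem.1 (hmap hu)
  set g : ℂ → ℂ := fun ζ => moeb (f u) (f (moeb u ζ)) with hg
  have hmu : Set.MapsTo (moeb u) (ball (0:ℂ) 1) (ball (0:ℂ) 1) := fun ζ hζ =>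
    abs_lt_one_iff_mem.2 (moeb_mem u ζ hau (abs_lt_one_iff_mem.1 hζ))
  have hmfu : Set.MapsTo (moeb (f u)) (ball (0:ℂ) 1) (ball (0:ℂ) 1) := fun ζ hζ =>
    abs_lt_one_iff_mem.2 (moeb_mem (f u) ζ hafu (abs_lt_one_iff_mem.1 hζ))
  have hgd : DifferentiableOn ℂ g (ball (0:ℂ) 1) :=
    ((moeb_diff (f u) hafu).comp (hf.comp (moeb_diff u hau) hmu) (hmap.comp hmu))
  have hgmap : Set.MapsTo g (ball (0:ℂ) 1) (ball (0:ℂ) 1) :=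
    hmfu.comp (hmap.comp hmu)
  have hg0 : g 0 = 0 := by simp [hg, moeb_zero, moeb]
  have hmem : moeb u v ∈ ball (0:ℂ) 1 := hmu hv
  have hS := dist_le_div_mul_dist_of_mapsTo_ball hgd (by rw [hg0]; exact hgmap.mono_right ball_subset_closedBall) hmem
  have hgv : g (moeb u v) = moeb (f u) (f v) := by
    rw [hg]; simp only []; rw [moeb_invol u v hau hav]
  rw [hgv, hg0] at hS
  simpa [Complex.dist_eq] using hS

private lemma one_sub_normSq_pos {a : ℂ} (ha : ‖a‖ < 1) :
    0 < 1 - Complex.normSq a := by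
  nlinarith [norm_nonneg a, Complex.sq_norm a]

private lemma julia_step {a b a' b' : ℂ} (haa : ‖a‖ < 1) (hab : ‖b‖ < 1)
    (haa' : ‖a'‖ < 1) (hab' : ‖b'‖ < 1)
    (hSP : ‖moeb a' b'‖ ≤ ‖moeb a b‖) :
    Complex.normSq (1 - (starRingEnd ℂ) a' * b') / (1 - Complex.normSq b') ≤
      ((1 - Complex.normSq a') / (1 - Complex.normSq a)) *
        (Complex.normSq (1 - (starRingEnd ℂ) a * b) / (1 - Complex.normSq b)) := by
  have hda := den_ne a b haa hab
  have hda' := den_ne a' b' haa' hab'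
  have hD : 0 < Complex.normSq (1 - (starRingEnd ℂ) a * b) := Complex.normSq_pos.2 hda
  have hD' : 0 < Complex.normSq (1 - (starRingEnd ℂ) a' * b') := Complex.normSq_pos.2 hda'
  have hPa := one_sub_normSq_pos haa
  have hPb := one_sub_normSq_pos hab
  have hPa' := one_sub_normSq_pos haa'
  have hPb' := one_sub_normSq_pos hab'
  have hsq : Complex.normSq (moeb a' b') ≤ Complex.normSq (moeb a b) := by
    rw [← Complex.sq_norm, ← Complex.sq_norm]
    exact pow_le_pow_left₀ (norm_nonneg _) hSP 2
  have hns : Complex.normSq (moeb a b)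
      = Complex.normSq (a - b) / Complex.normSq (1 - (starRingEnd ℂ) a * b) := by
    simp [moeb, map_div₀]
  have hns' : Complex.normSq (moeb a' b')
      = Complex.normSq (a' - b') / Complex.normSq (1 - (starRingEnd ℂ) a' * b') := by
    simp [moeb, map_div₀]
  rw [hns, hns'] at hsq
  have hmul := (div_le_div_iff₀ hD' hD).1 hsq
  have hid := normSq_identity a b
  have hid' := normSq_identity a' b'
  have hkey : Complex.normSq (1 - (starRingEnd ℂ) a' * b') *
      ((1 - Complex.normSq a) * (1 - Complex.normSq b)) ≤
      ((1 - Complex.normSq a') * (1 - Complex.normSq b')) *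
        Complex.normSq (1 - (starRingEnd ℂ) a * b) := by
    rw [← hid, ← hid']
    nlinarith [hmul]
  rw [div_mul_div_comm, div_le_div_iff₀ hPb' (mul_pos hPa hPb)]
  calc Complex.normSq (1 - (starRingEnd ℂ) a' * b') *
      ((1 - Complex.normSq a) * (1 - Complex.normSq b)) ≤
      ((1 - Complex.normSq a') * (1 - Complex.normSq b')) *
        Complex.normSq (1 - (starRingEnd ℂ) a * b) := hkey
    _ = (1 - Complex.normSq a') * Complex.normSq (1 - (starRingEnd ℂ) a * b) *
        (1 - Complex.normSq b') := by ring

theorem julia_inequality (f : ℂ → ℂ)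
    (hf : DifferentiableOn ℂ f (ball (0 : ℂ) 1))
    (hmap : Set.MapsTo f (ball (0 : ℂ) 1) (ball (0 : ℂ) 1))
    (z : ℕ → ℂ) (hz : ∀ k, z k ∈ ball (0 : ℂ) 1)
    (hlim : Tendsto z atTop (nhds 1))
    (hnontan : ∃ C > 0, ∀ k, ‖1 - z k‖ ≤ C * (1 - ‖z k‖))
    (hasym : Tendsto (fun k => (f (z k) - z k) / (‖z k - 1‖ : ℂ))
      atTop (nhds 0)) :
    ∀ w ∈ ball (0 : ℂ) 1,
      ‖1 - f w‖ ^ 2 / (1 - ‖f w‖ ^ 2) ≤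
        ‖1 - w‖ ^ 2 / (1 - ‖w‖ ^ 2) := by
  obtain ⟨C, hC, hCle⟩ := hnontan
  intro w hw
  have haw : ‖w‖ < 1 := abs_lt_one_iff_mem.1 hw
  have hafw : ‖f w‖ < 1 := abs_lt_one_iff_mem.1 (hmap hw)
  have haz : ∀ k, ‖z k‖ < 1 := fun k => abs_lt_one_iff_mem.1 (hz k)
  have hafz : ∀ k, ‖f (z k)‖ < 1 := fun k => abs_lt_one_iff_mem.1 (hmap (hz k))
  set ε : ℕ → ℝ := fun k => ‖(f (z k) - z k) / (‖z k - 1‖ : ℂ)‖ with hε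
  have hzne : ∀ k, ‖z k - 1‖ ≠ 0 := by
    intro k h
    have h1 : z k - 1 = 0 := norm_eq_zero.1 h
    have h2 : z k = 1 := by linear_combination h1
    have h3 := haz k
    rw [h2] at h3
    simp at h3
  have hεnn : ∀ k, 0 ≤ ε k := fun k => norm_nonneg _
  have hεeq : ∀ k, ‖f (z k) - z k‖ = ε k * ‖z k - 1‖ := by
    intro k
    rw [hε]
    simp only [norm_div, Complex.norm_real, Real.norm_of_nonneg (norm_nonneg (z k - 1))]
    field_simp [hzne k]
  -- Step inequality for each k
  have hstep : ∀ k,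
      Complex.normSq (1 - (starRingEnd ℂ) (f (z k)) * f w) / (1 - Complex.normSq (f w)) ≤
      ((1 + C * ε k) * ((1 + ‖f (z k)‖) / (1 + ‖z k‖))) *
        (Complex.normSq (1 - (starRingEnd ℂ) (z k) * w) / (1 - Complex.normSq w)) := by
    intro k
    have hSP := schwarz_pick f hf hmap (hz k) hw
    have h1 := julia_step (haz k) haw (hafz k) hafw hSP
    set A := ‖z k‖ with hA
    set A' := ‖f (z k)‖ with hA'
    have htri : A - A' ≤ ‖f (z k) - z k‖ := by
      have h2 := abs_norm_sub_norm_le (z k) (f (z k))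
      have h3 : ‖z k - f (z k)‖ = ‖f (z k) - z k‖ :=
        norm_sub_rev _ _
      rw [h3] at h2
      calc A - A' ≤ |A - A'| := le_abs_self _
        _ ≤ _ := h2
    have hna : ‖z k - 1‖ ≤ C * (1 - A) := by
      have := hCle k
      rwa [norm_sub_rev] at this
    have h1A' : 1 - A' ≤ (1 + C * ε k) * (1 - A) := by
      have h4 : ‖f (z k) - z k‖ ≤ ε k * (C * (1 - A)) := by
        rw [hεeq k]
        exact mul_le_mul_of_nonneg_left hna (hεnn k)
      nlinarith [htri]
    have hratio : (1 - Complex.normSq (f (z k))) / (1 - Complex.normSq (z k)) ≤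
        (1 + C * ε k) * ((1 + A') / (1 + A)) := by
      have hnsa : Complex.normSq (z k) = A ^ 2 := (Complex.sq_norm _).symm
      have hnsa' : Complex.normSq (f (z k)) = A' ^ 2 := (Complex.sq_norm _).symm
      have hApos : (0:ℝ) < 1 + A := by positivity
      have hA2 : (0:ℝ) < 1 - A ^ 2 := by nlinarith [norm_nonneg (z k), haz k]
      rw [hnsa, hnsa', mul_div_assoc', div_le_div_iff₀ hA2 hApos]
      have hA'nn : (0:ℝ) ≤ A' := norm_nonneg _
      nlinarith [mul_le_mul_of_nonneg_right h1A'
        (by positivity : (0:ℝ) ≤ (1 + A') * (1 + A))]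
    calc Complex.normSq (1 - (starRingEnd ℂ) (f (z k)) * f w) / (1 - Complex.normSq (f w))
        ≤ ((1 - Complex.normSq (f (z k))) / (1 - Complex.normSq (z k))) *
          (Complex.normSq (1 - (starRingEnd ℂ) (z k) * w) / (1 - Complex.normSq w)) := h1
      _ ≤ _ := by
          apply mul_le_mul_of_nonneg_right hratio
          exact div_nonneg (Complex.normSq_nonneg _) (one_sub_normSq_pos haw).le
  -- Limits
  have h0 : Tendsto (fun k => z k - 1) atTop (nhds 0) := by
    have := hlim.sub (tendsto_const_nhds : Tendsto (fun _ : ℕ => (1:ℂ)) atTop (nhds 1))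
    simpa using this
  have habs0 : Tendsto (fun k => ‖z k - 1‖) atTop (nhds 0) := by
    simpa [Function.comp_def] using (continuous_norm.tendsto 0).comp h0
  have hcoe0 : Tendsto (fun k => ((‖z k - 1‖) : ℂ)) atTop (nhds 0) := by
    simpa [Function.comp_def] using (Complex.continuous_ofReal.tendsto 0).comp habs0
  have hdiff0 : Tendsto (fun k => f (z k) - z k) atTop (nhds 0) := by
    refine Tendsto.congr (fun k => ?_) (by simpa using hasym.mul hcoe0)
    exact div_mul_cancel₀ _ (Complex.ofReal_ne_zero.2 (hzne k))
  have hfz1 : Tendsto (fun k => f (z k)) atTop (nhds 1) := by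
    have h5 := hlim.add hdiff0
    have h6 : ∀ k, z k + (f (z k) - z k) = f (z k) := fun k => by ring
    simpa [h6] using h5
  have hεlim : Tendsto ε atTop (nhds 0) := by
    have h9 := (continuous_norm.tendsto 0).comp hasym
    simp only [Function.comp_def, norm_zero] at h9
    exact h9
  have hAlim : Tendsto (fun k => ‖z k‖) atTop (nhds 1) := by
    simpa [Function.comp_def] using (continuous_norm.tendsto 1).comp hlim
  have hA'lim : Tendsto (fun k => ‖f (z k)‖) atTop (nhds 1) := by
    simpa [Function.comp_def] using (continuous_norm.tendsto 1).comp hfz1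
  have hconjz : Tendsto (fun k => (starRingEnd ℂ) (z k)) atTop (nhds 1) := by
    simpa [Function.comp_def] using ((Complex.continuous_conj).tendsto 1).comp hlim
  have hconjfz : Tendsto (fun k => (starRingEnd ℂ) (f (z k))) atTop (nhds 1) := by
    simpa [Function.comp_def] using ((Complex.continuous_conj).tendsto 1).comp hfz1
  have hLlim : Tendsto
      (fun k => Complex.normSq (1 - (starRingEnd ℂ) (f (z k)) * f w) /
        (1 - Complex.normSq (f w)))
      atTop (nhds (Complex.normSq (1 - f w) / (1 - Complex.normSq (f w)))) := by
    have h7 : Tendsto (fun k => Complex.normSq (1 - (starRingEnd ℂ) (f (z k)) * f w))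
        atTop (nhds (Complex.normSq (1 - 1 * f w))) :=
      (Complex.continuous_normSq.tendsto _).comp
        (tendsto_const_nhds.sub (hconjfz.mul tendsto_const_nhds))
    simpa using h7.div_const _
  have hclim : Tendsto (fun k => Complex.normSq (1 - (starRingEnd ℂ) (z k) * w))
      atTop (nhds (Complex.normSq (1 - w))) := by
    have h7 : Tendsto (fun k => Complex.normSq (1 - (starRingEnd ℂ) (z k) * w))
        atTop (nhds (Complex.normSq (1 - 1 * w))) :=
      (Complex.continuous_normSq.tendsto _).comp
        (tendsto_const_nhds.sub (hconjz.mul tendsto_const_nhds))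
    simpa using h7
  have hRlim : Tendsto
      (fun k => ((1 + C * ε k) * ((1 + ‖f (z k)‖) / (1 + ‖z k‖))) *
        (Complex.normSq (1 - (starRingEnd ℂ) (z k) * w) / (1 - Complex.normSq w)))
      atTop (nhds (((1 + C * 0) * ((1 + 1) / (1 + 1))) *
        (Complex.normSq (1 - w) / (1 - Complex.normSq w)))) := by
    exact ((tendsto_const_nhds.add (tendsto_const_nhds.mul hεlim)).mul
      ((tendsto_const_nhds.add hA'lim).div (tendsto_const_nhds.add hAlim)
        (by norm_num))).mul (hclim.div_const _)
  have hfinal := le_of_tendsto_of_tendsto' hLlim hRlim hstep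
  rw [Complex.sq_norm, Complex.sq_norm, Complex.sq_norm, Complex.sq_norm]
  have h8 : ((1 + C * 0) * ((1 + 1) / (1 + 1))) *
      (Complex.normSq (1 - w) / (1 - Complex.normSq w)) =
      Complex.normSq (1 - w) / (1 - Complex.normSq w) := by norm_num
  rwa [h8] at hfinal
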